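/- For the Farey natural extension ℱ on Ω = [0,1]^2 with vertical strips V_k = (1/(k+1), 1/k] × [0,1] and horizontal strips H_k = [0,1] × (1/(k+1), 1/k], one has ℱ(V_1) = H_1 up to Lebesgue-null sets, and for every k > 1, ℱ(V_k ∩ H_b) = V_{k-1} ∩ H_{b+1} up to Lebesgue-null sets, for every b ≥ 1. -/

import Mathlib

open MeasureTheory

noncomputable section

/-- Ito's natural extension map of the Farey tent map on `Ω = [0,1]²`. -/
def Fbar (p : ℝ × ℝ) : ℝ × ℝ :=
  if p.1 ≤ 1 / 2 then (p.1 / (1 - p.1), p.2 / (1 + p.2))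
  else ((1 - p.1) / p.1, 1 / (1 + p.2))

/-- The vertical strip `V_k = (1/(k+1), 1/k] × [0,1]`. -/
def V (k : ℕ) : Set (ℝ × ℝ) := Set.Ioc (1 / ((k : ℝ) + 1)) (1 / (k : ℝ)) ×ˢ Set.Icc 0 1

/-- The horizontal strip `H_k = [0,1] × (1/(k+1), 1/k]`. -/
def H (k : ℕ) : Set (ℝ × ℝ) := Set.Icc (0 : ℝ) 1 ×ˢ Set.Ioc (1 / ((k : ℝ) + 1)) (1 / (k : ℝ))

/-- The image of `V 1` under `Fbar` is `[0,1) × [1/2, 1]`. -/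
lemma Fbar_image_V1 : Fbar '' V 1 = Set.Ico (0:ℝ) 1 ×ˢ Set.Icc (1/2 : ℝ) 1 := by
  ext ⟨u, v⟩
  simp only [V, Set.mem_image, Set.mem_prod, Set.mem_Ioc, Set.mem_Icc, Set.mem_Ico,
    Nat.cast_one, Prod.exists]
  constructor
  · rintro ⟨x, y, ⟨⟨hx1, hx2⟩, hy1, hy2⟩, hF⟩
    have hx1' : (1:ℝ)/2 < x := by linarith [hx1]
    have hxpos : 0 < x := by linarith
    have hx2' : x ≤ 1 := by linarith [hx2]
    rw [Fbar, if_neg (by simpa using not_le.mpr hx1')] at hF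
    simp only [Prod.mk.injEq] at hF
    obtain ⟨hu, hv⟩ := hF
    refine ⟨⟨?_, ?_⟩, ?_, ?_⟩
    · rw [← hu]; exact div_nonneg (by linarith) hxpos.le
    · rw [← hu, div_lt_one hxpos]; linarith
    · rw [← hv, le_div_iff₀ (by linarith)]; linarith
    · rw [← hv, div_le_one (by linarith)]; linarith
  · rintro ⟨⟨hu1, hu2⟩, hv1, hv2⟩
    have hvpos : 0 < v := by linarith
    have h1u : (0:ℝ) < 1 + u := by linarith
    refine ⟨1/(1+u), (1-v)/v, ⟨⟨?_, ?_⟩, ?_, ?_⟩, ?_⟩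
    · exact one_div_lt_one_div_of_lt h1u (by linarith)
    · exact one_div_le_one_div_of_le (by norm_num) (by linarith)
    · exact div_nonneg (by linarith) hvpos.le
    · rw [div_le_one hvpos]; linarith
    · have hne : ¬((1:ℝ)/(1+u) ≤ 1/2) := by
        rw [not_le]
        exact one_div_lt_one_div_of_lt h1u (by linarith)
      rw [Fbar, if_neg (by simpa using hne)]
      simp only [Prod.mk.injEq]
      constructor
      · have hpos : (0:ℝ) < 1/(1+u) := by positivity
        rw [div_eq_iff hpos.ne']
        field_simp
        ring
      · have hD : (0:ℝ) < 1 + (1-v)/v := by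
          have := div_nonneg (by linarith : (0:ℝ) ≤ 1 - v) hvpos.le
          linarith
        rw [eq_comm, eq_div_iff hD.ne']
        field_simp
        ring

set_option maxHeartbeats 2000000 in
lemma Fbar_image_VH (k b : ℕ) (hk : 1 < k) (hb : 1 ≤ b) :
    Fbar '' (V k ∩ H b) = V (k - 1) ∩ H (b + 1) := by
  have hK : (2:ℝ) ≤ (k:ℝ) := by exact_mod_cast hk
  have hB : (1:ℝ) ≤ (b:ℝ) := by exact_mod_cast hb
  have hkc : ((k - 1 : ℕ) : ℝ) = (k:ℝ) - 1 := by
    push_cast [Nat.cast_sub hk.le]; ring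
  have hKpos : (0:ℝ) < (k:ℝ) := by linarith
  have hK1pos : (0:ℝ) < (k:ℝ) - 1 := by linarith
  have hBpos : (0:ℝ) < (b:ℝ) := by linarith
  ext ⟨u, v⟩
  simp only [V, H, Set.mem_image, Set.mem_inter_iff, Set.mem_prod, Set.mem_Ioc, Set.mem_Icc,
    hkc, Prod.exists, Nat.cast_add, Nat.cast_one]
  constructor
  · rintro ⟨x, y, ⟨⟨⟨hx1, hx2⟩, hy0, hy1'⟩, ⟨hx0, hx1'⟩, hy1, hy2⟩, hF⟩
    have hxpos : 0 < x := lt_trans (by positivity) hx1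
    have hx2' : x ≤ 1/2 := le_trans hx2 (by
      rw [div_le_div_iff₀ hKpos (by norm_num)]; linarith)
    have h1x : (0:ℝ) < 1 - x := by linarith
    have hypos : 0 < y := lt_trans (by positivity) hy1
    have h1y : (0:ℝ) < 1 + y := by linarith
    rw [Fbar, if_pos hx2'] at hF
    simp only [Prod.mk.injEq] at hF
    obtain ⟨hu, hv⟩ := hF
    rw [div_lt_iff₀ (by positivity)] at hx1
    rw [le_div_iff₀ hKpos] at hx2
    rw [div_lt_iff₀ (by positivity)] at hy1
    rw [le_div_iff₀ hBpos] at hy2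
    have hu1 : 1/((k:ℝ)-1+1) < u := by
      rw [← hu, div_lt_div_iff₀ (by linarith) h1x]; nlinarith
    have hu2 : u ≤ 1/((k:ℝ)-1) := by
      rw [← hu, div_le_div_iff₀ h1x hK1pos]; nlinarith
    have hv1 : 1/((b:ℝ)+1+1) < v := by
      rw [← hv, div_lt_div_iff₀ (by linarith) h1y]; nlinarith
    have hv2 : v ≤ 1/((b:ℝ)+1) := by
      rw [← hv, div_le_div_iff₀ h1y (by linarith)]; nlinarith
    have hu0 : 0 ≤ u := le_of_lt (lt_trans (by positivity : (0:ℝ) < 1/((k:ℝ)-1+1)) hu1)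
    have hu1' : u ≤ 1 := le_trans hu2 (by rw [div_le_one hK1pos]; linarith)
    have hv0 : 0 ≤ v := le_of_lt (lt_trans (by positivity) hv1)
    have hv1'' : v ≤ 1 := le_trans hv2 (by rw [div_le_one (by linarith)]; linarith)
    exact ⟨⟨⟨hu1, hu2⟩, hv0, hv1''⟩, ⟨hu0, hu1'⟩, hv1, hv2⟩
  · rintro ⟨⟨⟨hu1, hu2⟩, hv0, hv1'⟩, ⟨hu0, hu1'⟩, hv1, hv2⟩
    have hupos : 0 < u := lt_trans (by positivity : (0:ℝ) < 1/((k:ℝ)-1+1)) hu1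
    have h1u : (0:ℝ) < 1 + u := by linarith
    have hvpos : 0 < v := lt_trans (by positivity) hv1
    have hvhalf : v ≤ 1/2 := le_trans hv2 (by
      rw [div_le_div_iff₀ (by linarith) (by norm_num)]; linarith)
    have h1v : (0:ℝ) < 1 - v := by linarith
    rw [div_lt_iff₀ (by linarith)] at hu1
    rw [le_div_iff₀ hK1pos] at hu2
    rw [div_lt_iff₀ (by linarith)] at hv1
    rw [le_div_iff₀ (by linarith : (0:ℝ) < (b:ℝ) + 1)] at hv2
    refine ⟨u/(1+u), v/(1-v), ⟨⟨⟨?_, ?_⟩, ?_, ?_⟩, ⟨?_, ?_⟩, ?_, ?_⟩, ?_⟩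
    · rw [div_lt_div_iff₀ (by linarith) h1u]; nlinarith
    · rw [div_le_div_iff₀ h1u hKpos]; nlinarith
    · positivity
    · rw [div_le_one h1v]; linarith
    · positivity
    · rw [div_le_one h1u]; linarith
    · rw [div_lt_div_iff₀ (by linarith) h1v]; nlinarith
    · rw [div_le_div_iff₀ h1v hBpos]; nlinarith
    · have hle : u/(1+u) ≤ 1/2 := by
        rw [div_le_div_iff₀ h1u (by norm_num)]; linarith
      rw [Fbar, if_pos hle]
      simp only [Prod.mk.injEq]
      constructor
      · have hD : (0:ℝ) < 1 - u/(1+u) := by rw [sub_pos, div_lt_one h1u]; linarith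
        rw [div_eq_iff hD.ne']
        field_simp
        ring
      · have hD : (0:ℝ) < 1 + v/(1-v) := by
          have := div_nonneg hvpos.le h1v.le; linarith
        rw [div_eq_iff hD.ne']
        field_simp
        ring

/-- Up to Lebesgue-null sets, `ℱ(V_1) = H_1`, and for every `k > 1` and `b ≥ 1`,
`ℱ(V_k ∩ H_b) = V_{k-1} ∩ H_{b+1}`. -/
theorem stmt15 :
    volume (symmDiff (Fbar '' V 1) (H 1)) = 0 ∧
      ∀ k b : ℕ, 1 < k → 1 ≤ b →
        volume (symmDiff (Fbar '' (V k ∩ H b)) (V (k - 1) ∩ H (b + 1))) = 0 := by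
  constructor
  · rw [Fbar_image_V1]
    have hsub : symmDiff (Set.Ico (0:ℝ) 1 ×ˢ Set.Icc (1/2:ℝ) 1) (H 1)
        ⊆ ({(1:ℝ)} ×ˢ (Set.univ : Set ℝ)) ∪ ((Set.univ : Set ℝ) ×ˢ {(1/2:ℝ)}) := by
      rintro ⟨u, v⟩ h
      rw [Set.mem_symmDiff] at h
      rcases h with ⟨hA, hB⟩ | ⟨hB, hA⟩
      · obtain ⟨hu, hv⟩ := hA
        simp only [Set.mem_Ico, Set.mem_Icc] at hu hv
        by_cases hvc : v = 1/2
        · exact Or.inr ⟨Set.mem_univ u, hvc⟩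
        · exfalso
          apply hB
          refine ⟨⟨hu.1, hu.2.le⟩, ?_, ?_⟩
          · norm_num
            exact lt_of_le_of_ne hv.1 (Ne.symm hvc)
          · norm_num
            exact hv.2
      · obtain ⟨hu, hv⟩ := hB
        simp only [Set.mem_Icc, Set.mem_Ioc, Nat.cast_one] at hu hv
        by_cases huc : u = 1
        · exact Or.inl ⟨huc, Set.mem_univ v⟩
        · exfalso
          apply hA
          have hu1 : u < 1 := lt_of_le_of_ne hu.2 huc
          refine ⟨Set.mem_Ico.mpr ⟨hu.1, hu1⟩, Set.mem_Icc.mpr ⟨?_, ?_⟩⟩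
          · have := hv.1; linarith [hv.1]
          · have := hv.2; linarith [hv.2]
    refine measure_mono_null hsub ?_
    refine measure_union_null ?_ ?_ <;>
      · rw [show (volume : Measure (ℝ×ℝ)) = (volume : Measure ℝ).prod volume from rfl,
          Measure.prod_prod]
        simp
  · intro k b hk hb
    rw [Fbar_image_VH k b hk hb, symmDiff_self]
    simp
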